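/- Let n ≥ 2 and β > −n/2, and let q be such that its Fourier transform q̂ : ℝⁿ → ℝ is a continuous function satisfying: (i) q̂(ξ) ≥ 0 for all ξ ∈ ℝⁿ; (ii) there is c > 0 and C > 0 such that q̂(ξ) ≥ C ⟨ξ⟩^{−n/2−β} whenever |ξ| > c; (iii) q̂(0) > 0. Define S(q)(η) := (1/|η|) ∫_{Γ(η)} q̂(ξ) q̂(η−ξ) dσ_η(ξ) for η ≠ 0, where Γ(η) := {ξ ∈ ℝⁿ : |ξ − η/2| = |η|/2} with surface measure σ_η. Then there is a constant C' > 0, independent of η, such that for every η with |η| > 4c, S(q)(η) ≥ C' max( ⟨η⟩^{−β−n/2−1}, ⟨η⟩^{−2β−2} ). -/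

import Mathlib

open MeasureTheory
open scoped ENNReal
open scoped NNReal

noncomputable section

abbrev Euc (n : ℕ) := EuclideanSpace ℝ (Fin n)

/-- The Japanese bracket `⟨x⟩ = (1+|x|²)^{1/2}`. -/
def jap {n : ℕ} (x : Euc n) : ℝ := Real.sqrt (1 + ‖x‖ ^ 2)

/-- The Ewald sphere measure `σ_{rη}`: the `(n-1)`-dimensional Hausdorff measure restricted
to `Γ_r(η) = {ξ : |ξ - η/2| = r|η|/2}`. -/
def ewaldM (n : ℕ) (r : ℝ) (η : Euc n) : Measure (Euc n) :=
  (MeasureTheory.Measure.hausdorffMeasure ((n : ℝ) - 1)).restrict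
    (Metric.sphere ((2 : ℝ)⁻¹ • η) (r * ‖η‖ / 2))

lemma sup_le_euc {m : ℕ} (x : Euc m) : ‖WithLp.equiv 2 (Fin m → ℝ) x‖ ≤ ‖x‖ := by
  have := (PiLp.lipschitzWith_ofLp 2 (fun _ : Fin m => ℝ)).dist_le_mul x 0
  simpa using this

lemma euc_le_sup {m : ℕ} (x : Fin m → ℝ) :
    ‖(WithLp.equiv 2 (Fin m → ℝ)).symm x‖ ≤ Real.sqrt m * ‖x‖ := by
  have h := (PiLp.antilipschitzWith_ofLp 2 (fun _ : Fin m => ℝ)).le_mul_dist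
    ((WithLp.equiv 2 (Fin m → ℝ)).symm x) 0
  simp only [dist_zero_right, Equiv.apply_symm_apply, map_zero] at h
  calc ‖(WithLp.equiv 2 (Fin m → ℝ)).symm x‖
      ≤ (((Fintype.card (Fin m) : ℝ≥0) ^ ((1:ℝ≥0∞) / 2).toReal : ℝ≥0) : ℝ) * ‖x‖ := by
        simpa [dist_zero_right] using h
    _ = Real.sqrt m * ‖x‖ := by
        congr 1
        rw [NNReal.coe_rpow, NNReal.coe_natCast, Fintype.card_fin]
        rw [Real.sqrt_eq_rpow]
        norm_num

lemma euc_lip {m : ℕ} : ∃ K : ℝ≥0, LipschitzWith K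
    (⇑(WithLp.equiv 2 (Fin m → ℝ)).symm) := by
  exact ⟨_, (PiLp.antilipschitzWith_ofLp 2 (fun _ : Fin m => ℝ)).to_rightInverse
    (Equiv.rightInverse_symm _)⟩

lemma euc_pos (m : ℕ) (hm : 1 ≤ m) {r : ℝ} (hr : 0 < r) :
    ENNReal.ofReal ((2 * r / Real.sqrt m) ^ m) ≤ μH[(m : ℝ)] (Metric.ball (0 : Euc m) r) := by
  have hsm : (0:ℝ) < Real.sqrt m := Real.sqrt_pos.2 (by exact_mod_cast hm)
  set g := (WithLp.equiv 2 (Fin m → ℝ)).symm with hg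
  set s : Set (Fin m → ℝ) := Metric.ball 0 (r / Real.sqrt m) with hs
  have h1 : volume s = ENNReal.ofReal ((2 * r / Real.sqrt m) ^ m) := by
    rw [hs, Real.volume_pi_ball _ (by positivity)]
    congr 2
    · ring
    · simp
  have h2 : μH[(m:ℝ)] s ≤ μH[(m:ℝ)] (⇑g '' s) := by
    have hlip : LipschitzWith 1 (WithLp.equiv 2 (Fin m → ℝ)) :=
      (PiLp.lipschitzWith_ofLp 2 (fun _ : Fin m => ℝ))
    have := hlip.hausdorffMeasure_image_le (d := (m:ℝ)) (by positivity) (⇑g '' s)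
    have him : (WithLp.equiv 2 (Fin m → ℝ)) '' (⇑g '' s) = s := by
      rw [← Set.image_comp]; simp [hg]
    rw [him] at this
    simpa using this
  have h3 : ⇑g '' s ⊆ Metric.ball (0 : Euc m) r := by
    rintro - ⟨x, hx, rfl⟩
    simp only [Metric.mem_ball, dist_zero_right] at hx ⊢
    calc ‖g x‖ ≤ Real.sqrt m * ‖x‖ := euc_le_sup x
      _ < Real.sqrt m * (r / Real.sqrt m) := by
          apply mul_lt_mul_of_pos_left _ hsm
          simpa [hs, dist_zero_right] using hx
      _ = r := by field_simp
  calc ENNReal.ofReal ((2 * r / Real.sqrt m) ^ m) = volume s := h1.symm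
    _ = μH[(m:ℝ)] s := by
        rw [← hausdorffMeasure_pi_real (ι := Fin m)]; norm_num
    _ ≤ μH[(m:ℝ)] (⇑g '' s) := h2
    _ ≤ _ := measure_mono h3

lemma euc_fin (m : ℕ) (K : ℝ) :
    μH[(m : ℝ)] (Metric.closedBall (0 : Euc m) K) < ⊤ := by
  obtain ⟨L, hL⟩ := euc_lip (m := m)
  set g := (WithLp.equiv 2 (Fin m → ℝ)).symm with hg
  have h3 : Metric.closedBall (0 : Euc m) K ⊆ ⇑g '' Metric.closedBall 0 |K| := by
    intro x hx
    refine ⟨WithLp.equiv 2 (Fin m → ℝ) x, ?_, by simp [hg]⟩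
    simp only [Metric.mem_closedBall, dist_zero_right] at hx ⊢
    exact le_trans (sup_le_euc x) (le_trans hx (le_abs_self K))
  calc μH[(m:ℝ)] (Metric.closedBall (0 : Euc m) K)
      ≤ μH[(m:ℝ)] (⇑g '' Metric.closedBall 0 |K|) := measure_mono h3
    _ ≤ (L : ℝ≥0∞) ^ (m:ℝ) * μH[(m:ℝ)] (Metric.closedBall (0 : Fin m → ℝ) |K|) :=
        hL.hausdorffMeasure_image_le (by positivity) _
    _ = (L : ℝ≥0∞) ^ (m:ℝ) * volume (Metric.closedBall (0 : Fin m → ℝ) |K|) := by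
        rw [← hausdorffMeasure_pi_real (ι := Fin m)]; norm_num
    _ < ⊤ := by
        apply ENNReal.mul_lt_top
        · exact ENNReal.rpow_lt_top_of_nonneg (by positivity) ENNReal.coe_ne_top
        · rw [Real.volume_pi_closedBall _ (abs_nonneg K)]
          exact ENNReal.ofReal_lt_top

section Sub
variable {n : ℕ} (V : Submodule ℝ (Euc n))

/-- isometric parametrization of a subspace -/
def subIso : Euc (Module.finrank ℝ V) →ₗᵢ[ℝ] Euc n :=
  V.subtypeₗᵢ.comp (stdOrthonormalBasis ℝ V).repr.symm.toLinearIsometry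

lemma subIso_mem (x : Euc (Module.finrank ℝ V)) : subIso V x ∈ V := by
  simp [subIso]

lemma subIso_surj {y : Euc n} (hy : y ∈ V) : ∃ x, subIso V x = y ∧ ‖x‖ = ‖y‖ := by
  refine ⟨(stdOrthonormalBasis ℝ V).repr ⟨y, hy⟩, by simp [subIso], ?_⟩
  rw [LinearIsometryEquiv.norm_map]
  rfl

lemma subspace_pos (hm : 1 ≤ Module.finrank ℝ V) {r : ℝ} (hr : 0 < r) :
    ENNReal.ofReal ((2 * r / Real.sqrt (Module.finrank ℝ V)) ^ (Module.finrank ℝ V)) ≤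
      μH[(Module.finrank ℝ V : ℝ)] ((V : Set (Euc n)) ∩ Metric.ball 0 r) := by
  set m := Module.finrank ℝ V
  have hsub : ⇑(subIso V) '' Metric.ball 0 r ⊆ (V : Set (Euc n)) ∩ Metric.ball 0 r := by
    rintro - ⟨x, hx, rfl⟩
    refine ⟨subIso_mem V x, ?_⟩
    simpa [(subIso V).norm_map] using hx
  calc ENNReal.ofReal ((2 * r / Real.sqrt m) ^ m) ≤ μH[(m:ℝ)] (Metric.ball (0 : Euc m) r) :=
        euc_pos m hm hr
    _ = μH[(m:ℝ)] (⇑(subIso V) '' Metric.ball 0 r) :=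
        ((subIso V).isometry.hausdorffMeasure_image (Or.inl (by positivity)) _).symm
    _ ≤ _ := measure_mono hsub

lemma subspace_fin {K : ℝ} :
    μH[(Module.finrank ℝ V : ℝ)] ((V : Set (Euc n)) ∩ Metric.closedBall 0 K) < ⊤ := by
  set m := Module.finrank ℝ V
  have hsub : (V : Set (Euc n)) ∩ Metric.closedBall 0 K ⊆
      ⇑(subIso V) '' Metric.closedBall 0 K := by
    rintro y ⟨hyV, hyK⟩
    obtain ⟨x, hx, hnx⟩ := subIso_surj V hyV
    refine ⟨x, ?_, hx⟩
    simp only [Metric.mem_closedBall, dist_zero_right] at hyK ⊢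
    rw [hnx]; exact hyK
  calc μH[(m:ℝ)] ((V : Set (Euc n)) ∩ Metric.closedBall 0 K)
      ≤ μH[(m:ℝ)] (⇑(subIso V) '' Metric.closedBall 0 K) := measure_mono hsub
    _ = μH[(m:ℝ)] (Metric.closedBall (0 : Euc m) K) :=
        (subIso V).isometry.hausdorffMeasure_image (Or.inl (by positivity)) _
    _ < ⊤ := euc_fin m K

end Sub

open RealInnerProductSpace in
lemma proj_norm_le {n : ℕ} (u : Euc n) (hu : ‖u‖ = 1) (w : Euc n) :
    ‖w - ⟪w, u⟫ • u‖ ≤ ‖w‖ := by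
  have horth : ⟪w - ⟪w, u⟫ • u, ⟪w, u⟫ • u⟫ = 0 := by
    simp only [inner_sub_left, real_inner_smul_left, real_inner_smul_right,
      real_inner_self_eq_norm_sq, hu]
    rw [norm_smul, Real.norm_eq_abs, hu, mul_one, sq_abs]
    ring
  have hsq := norm_add_sq_real (w - ⟪w, u⟫ • u) (⟪w, u⟫ • u)
  rw [sub_add_cancel, horth] at hsq
  nlinarith [norm_nonneg w, norm_nonneg (w - ⟪w, u⟫ • u), sq_nonneg ‖⟪w, u⟫ • u‖]

set_option maxHeartbeats 1000000 in
open RealInnerProductSpace in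
lemma cap_lb {n : ℕ} (hn : 2 ≤ n) (m p : Euc n) {R δ : ℝ}
    (hδ : 0 < δ) (hδR : δ ≤ R) (hp : dist p m = R) :
    ENNReal.ofReal ((2 * (δ / 2) / Real.sqrt ((n - 1 : ℕ))) ^ (n - 1)) ≤
      μH[(n : ℝ) - 1] (Metric.sphere m R ∩ Metric.ball p δ) := by
  have hR : 0 < R := hδ.trans_le hδR
  have hpm : ‖p - m‖ = R := by rw [← dist_eq_norm]; exact hp
  set u : Euc n := R⁻¹ • (p - m) with hu_def
  have hu : ‖u‖ = 1 := by
    rw [hu_def, norm_smul, hpm, norm_inv, Real.norm_eq_abs, abs_of_pos hR]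
    field_simp
  have hu0 : u ≠ 0 := by intro h; rw [h] at hu; simp at hu
  haveI : Fact (Module.finrank ℝ (Euc n) = (n - 1) + 1) :=
    ⟨by rw [finrank_euclideanSpace_fin]; omega⟩
  set V : Submodule ℝ (Euc n) := (ℝ ∙ u)ᗮ with hV_def
  have hV : Module.finrank ℝ V = n - 1 := Submodule.finrank_orthogonal_span_singleton hu0
  set π : Euc n → Euc n := fun x => x - ⟪x - p, u⟫ • u with hπ_def
  have hlip : LipschitzWith 1 π := by
    apply LipschitzWith.of_dist_le_mul
    intro x y
    have h1 : ⟪x - y, u⟫ = ⟪x - p, u⟫ - ⟪y - p, u⟫ := by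
      rw [← inner_sub_left]; congr 1; abel
    have h2 : π x - π y = (x - y) - ⟪x - y, u⟫ • u := by
      simp only [hπ_def]
      rw [h1, sub_smul]; abel
    rw [dist_eq_norm, dist_eq_norm, h2, NNReal.coe_one, one_mul]
    exact proj_norm_le u hu (x - y)
  have hd0 : (0:ℝ) ≤ (n:ℝ) - 1 := by
    have : (1:ℝ) ≤ (n:ℝ) := by exact_mod_cast (by omega : 1 ≤ n)
    linarith
  have hpm' : p - m = R • u := by
    rw [hu_def, smul_smul, mul_inv_cancel₀ hR.ne', one_smul]
  have key : ∀ v : Euc n, v ∈ V → ‖v‖ < δ / 2 →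
      p + v ∈ π '' (Metric.sphere m R ∩ Metric.ball p δ) := by
    intro v hvV hvb
    have huv : ⟪u, v⟫ = 0 := Submodule.mem_orthogonal_singleton_iff_inner_right.mp hvV
    have hvu : ⟪v, u⟫ = 0 := by rw [real_inner_comm]; exact huv
    have hs0 : 0 ≤ ‖v‖ := norm_nonneg v
    have hsR : ‖v‖ ≤ R := by nlinarith
    have hRs : (0:ℝ) ≤ R ^ 2 - ‖v‖ ^ 2 := by nlinarith
    set w := Real.sqrt (R ^ 2 - ‖v‖ ^ 2) with hw_def
    have hw0 : 0 ≤ w := Real.sqrt_nonneg _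
    have hw2 : w ^ 2 = R ^ 2 - ‖v‖ ^ 2 := Real.sq_sqrt hRs
    set t := R - w with ht_def
    have hwR : w ≤ R := by nlinarith
    have ht0 : 0 ≤ t := by rw [ht_def]; linarith
    have hts : t ≤ ‖v‖ := by
      have hle : R - ‖v‖ ≤ w := by
        rcases le_or_gt (R - ‖v‖) 0 with hcc | hcc
        · linarith
        · have h2 : (R - ‖v‖) ^ 2 ≤ R ^ 2 - ‖v‖ ^ 2 := by nlinarith
          calc R - ‖v‖ = Real.sqrt ((R - ‖v‖) ^ 2) := (Real.sqrt_sq hcc.le).symm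
            _ ≤ w := Real.sqrt_le_sqrt h2
      rw [ht_def]; linarith
    refine ⟨p + v - t • u, ⟨?_, ?_⟩, ?_⟩
    · rw [Metric.mem_sphere, dist_eq_norm]
      have hqm : p + v - t • u - m = (R - t) • u + v := by
        rw [show p + v - t • u - m = (p - m) + v - t • u by abel, hpm']
        module
      rw [hqm]
      have hnsq : ‖(R - t) • u + v‖ ^ 2 = R ^ 2 := by
        rw [norm_add_sq_real, real_inner_smul_left, huv, norm_smul, Real.norm_eq_abs, hu,
          mul_one, abs_of_nonneg (by linarith : (0:ℝ) ≤ R - t)]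
        have : R - t = w := by rw [ht_def]; ring
        rw [this]
        nlinarith
      calc ‖(R - t) • u + v‖ = Real.sqrt (‖(R - t) • u + v‖ ^ 2) :=
            (Real.sqrt_sq (norm_nonneg _)).symm
        _ = R := by rw [hnsq, Real.sqrt_sq hR.le]
    · rw [Metric.mem_ball, dist_eq_norm]
      have hqp : p + v - t • u - p = v - t • u := by abel
      rw [hqp]
      have hnsq : ‖v - t • u‖ ^ 2 = ‖v‖ ^ 2 + t ^ 2 := by
        rw [norm_sub_sq_real, real_inner_smul_right, hvu, norm_smul, Real.norm_eq_abs, hu,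
          mul_one, sq_abs]
        ring
      nlinarith [norm_nonneg (v - t • u)]
    · simp only [hπ_def]
      have h3 : p + v - t • u - p = v - t • u := by abel
      rw [h3, inner_sub_left, hvu, real_inner_smul_left, real_inner_self_eq_norm_sq, hu]
      norm_num
  have htrans : Isometry (fun x : Euc n => p + x) :=
    Isometry.of_dist_eq fun x y => by simp [dist_add_left]
  have hfr : 1 ≤ Module.finrank ℝ V := by rw [hV]; omega
  have hcast : (((n - 1 : ℕ) : ℝ)) = (n : ℝ) - 1 := by
    push_cast [Nat.cast_sub (by omega : 1 ≤ n)]; ring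
  have h := subspace_pos V hfr (half_pos hδ)
  rw [hV, hcast] at h
  calc ENNReal.ofReal ((2 * (δ / 2) / Real.sqrt ((n - 1 : ℕ))) ^ (n - 1))
      ≤ μH[(n:ℝ) - 1] ((V : Set (Euc n)) ∩ Metric.ball 0 (δ / 2)) := by
        rw [hcast]; exact h
    _ = μH[(n:ℝ) - 1] ((fun x => p + x) '' ((V : Set (Euc n)) ∩ Metric.ball 0 (δ / 2))) :=
        (htrans.hausdorffMeasure_image (Or.inl hd0) _).symm
    _ ≤ μH[(n:ℝ) - 1] (π '' (Metric.sphere m R ∩ Metric.ball p δ)) := by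
        apply measure_mono
        rintro - ⟨v, ⟨hvV, hvb⟩, rfl⟩
        exact key v hvV (by simpa using hvb)
    _ ≤ ((1:ℝ≥0) : ℝ≥0∞) ^ ((n:ℝ) - 1) * μH[(n:ℝ) - 1] (Metric.sphere m R ∩ Metric.ball p δ) :=
        hlip.hausdorffMeasure_image_le hd0 _
    _ = _ := by simp

lemma loclip_image_fin {n : ℕ} {d : ℝ} (hd : 0 ≤ d) {f : Euc n → Euc n} {s : Set (Euc n)}
    (hs : IsCompact s) (hf : ∀ x ∈ s, ContDiffAt ℝ 1 f x) (hμ : μH[d] s < ⊤) :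
    μH[d] (f '' s) < ⊤ := by
  choose K t ht hlip using fun (x : Euc n) (hx : x ∈ s) => (hf x hx).exists_lipschitzOnWith
  obtain ⟨T, hT⟩ := hs.elim_nhds_subcover' t ht
  have hsub : f '' s ⊆ ⋃ x ∈ T, f '' (s ∩ t x x.2) := by
    rintro - ⟨y, hy, rfl⟩
    obtain ⟨U, hU, hyU⟩ := Set.mem_iUnion₂.mp (hT hy)
    exact Set.mem_iUnion₂.mpr ⟨U, hU, ⟨y, ⟨hy, hyU⟩, rfl⟩⟩
  calc μH[d] (f '' s) ≤ ∑ x ∈ T, μH[d] (f '' (s ∩ t x x.2)) :=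
        (measure_mono hsub).trans (measure_biUnion_finset_le _ _)
    _ < ⊤ := by
        apply ENNReal.sum_lt_top.mpr
        intro x _
        calc μH[d] (f '' (s ∩ t x x.2))
            ≤ (K x x.2 : ℝ≥0∞) ^ d * μH[d] (s ∩ t x x.2) :=
              ((hlip x x.2).mono Set.inter_subset_right).hausdorffMeasure_image_le hd
          _ ≤ (K x x.2 : ℝ≥0∞) ^ d * μH[d] s := by
              gcongr
              exact Set.inter_subset_left
          _ < ⊤ := ENNReal.mul_lt_top
              (ENNReal.rpow_lt_top_of_nonneg hd ENNReal.coe_ne_top) hμ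

lemma coord_le_norm {n : ℕ} (x : Euc n) (i : Fin n) : |x i| ≤ ‖x‖ := by
  have h1 : |x i| ≤ ‖WithLp.equiv 2 (Fin n → ℝ) x‖ := by
    simpa [Real.norm_eq_abs] using norm_le_pi_norm (WithLp.equiv 2 (Fin n → ℝ) x) i
  exact h1.trans (sup_le_euc x)

lemma norm_le_card_sup {n : ℕ} (x : Euc n) (b : ℝ) (hb : 0 ≤ b) (h : ∀ j, |x j| ≤ b) :
    ‖x‖ ≤ Real.sqrt n * b := by
  have h1 : ‖x‖ ≤ Real.sqrt n * ‖WithLp.equiv 2 (Fin n → ℝ) x‖ := by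
    simpa using euc_le_sup (WithLp.equiv 2 (Fin n → ℝ) x)
  have h2 : ‖WithLp.equiv 2 (Fin n → ℝ) x‖ ≤ b := by
    apply pi_norm_le_iff_of_nonneg hb |>.mpr
    intro j
    simpa [Real.norm_eq_abs] using h j
  calc ‖x‖ ≤ Real.sqrt n * ‖WithLp.equiv 2 (Fin n → ℝ) x‖ := h1
    _ ≤ Real.sqrt n * b := by
        apply mul_le_mul_of_nonneg_left h2 (Real.sqrt_nonneg _)

set_option maxHeartbeats 1000000 in
lemma sphere_fin {n : ℕ} (hn : 2 ≤ n) (m : Euc n) {R : ℝ} (hR : 0 < R) :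
    μH[(n : ℝ) - 1] (Metric.sphere m R) < ⊤ := by
  have hd0 : (0:ℝ) ≤ (n:ℝ) - 1 := by
    have : (1:ℝ) ≤ (n:ℝ) := by exact_mod_cast (by omega : 1 ≤ n)
    linarith
  have hcont : ∀ i : Fin n, Continuous fun x : Euc n => x i := fun i =>
    (continuous_apply i).comp (PiLp.continuous_ofLp 2 (fun _ : Fin n => ℝ))
  have hsqn : Real.sqrt n ≤ (n:ℝ) := by
    have h1 : (1:ℝ) ≤ (n:ℝ) := by exact_mod_cast (by omega : 1 ≤ n)
    have := Real.sqrt_le_sqrt (show (n:ℝ) ≤ (n:ℝ)^2 by nlinarith)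
    rwa [Real.sqrt_sq (by positivity)] at this
  set ρ : Euc n → Euc n := fun x => m + (R * ‖x‖⁻¹) • x with hρ_def
  set F : Fin n → Bool → Set (Euc n) :=
    fun i ε => {x | x i = (if ε then 1 else -1) ∧ ∀ j, |x j| ≤ 1} with hF_def
  have hFnorm : ∀ i ε, ∀ x ∈ F i ε, 1 ≤ ‖x‖ := by
    rintro i ε x ⟨hxi, -⟩
    have := coord_le_norm x i
    rw [hxi] at this
    rcases ε <;> simpa using this
  have hFbdd : ∀ i ε, ∀ x ∈ F i ε, ‖x‖ ≤ Real.sqrt n := by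
    rintro i ε x ⟨-, hxj⟩
    simpa using norm_le_card_sup x 1 zero_le_one hxj
  have hFcompact : ∀ i ε, IsCompact (F i ε) := by
    intro i ε
    have hclosed : IsClosed (F i ε) := by
      apply IsClosed.inter
      · exact isClosed_eq (hcont i) continuous_const
      · show IsClosed {x : Euc n | ∀ j, |x j| ≤ 1}
        have heq : {x : Euc n | ∀ j, |x j| ≤ 1} = ⋂ j, {x : Euc n | |x j| ≤ 1} := by
          ext y; simp
        rw [heq]
        exact isClosed_iInter fun j =>
          isClosed_le ((continuous_abs).comp (hcont j)) continuous_const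
    apply (isCompact_closedBall (0 : Euc n) (Real.sqrt n)).of_isClosed_subset hclosed
    intro x hx
    simpa [Metric.mem_closedBall, dist_zero_right] using hFbdd i ε x hx
  -- finiteness of each face
  have hFfin : ∀ i ε, μH[(n:ℝ) - 1] (F i ε) < ⊤ := by
    intro i ε
    have hsingle : (EuclideanSpace.single i (1:ℝ)) ≠ 0 := by
      intro h
      have := congrArg norm h
      rw [EuclideanSpace.norm_single] at this
      simp at this
    haveI : Fact (Module.finrank ℝ (Euc n) = (n - 1) + 1) :=
      ⟨by rw [finrank_euclideanSpace_fin]; omega⟩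
    set W : Submodule ℝ (Euc n) := (ℝ ∙ (EuclideanSpace.single i (1:ℝ)))ᗮ with hW_def
    have hW : Module.finrank ℝ W = n - 1 := Submodule.finrank_orthogonal_span_singleton hsingle
    set cε : ℝ := if ε then 1 else -1 with hcε_def
    have hsub : F i ε ⊆ (fun y => cε • EuclideanSpace.single i (1:ℝ) + y) ''
        ((W : Set (Euc n)) ∩ Metric.closedBall 0 ((n:ℝ) + 1)) := by
      rintro x ⟨hxi, hxj⟩
      refine ⟨x - cε • EuclideanSpace.single i (1:ℝ), ⟨?_, ?_⟩, by module⟩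
      · rw [SetLike.mem_coe, Submodule.mem_orthogonal_singleton_iff_inner_right]
        have : (inner ℝ (EuclideanSpace.single i (1:ℝ))
            (x - cε • EuclideanSpace.single i (1:ℝ)) : ℝ)
            = x i - cε := by
          rw [inner_sub_right, real_inner_smul_right, EuclideanSpace.inner_single_left,
            EuclideanSpace.inner_single_left]
          simp [EuclideanSpace.single_apply]
        rw [this, hxi, hcε_def]
        ring
      · rw [Metric.mem_closedBall, dist_zero_right]
        have h1 : ‖x‖ ≤ Real.sqrt n := hFbdd i ε x ⟨hxi, hxj⟩
        have h2 : ‖cε • EuclideanSpace.single i (1:ℝ)‖ = 1 := by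
          rw [norm_smul, EuclideanSpace.norm_single]
          rcases ε <;> simp [hcε_def]
        calc ‖x - cε • EuclideanSpace.single i (1:ℝ)‖
            ≤ ‖x‖ + ‖cε • EuclideanSpace.single i (1:ℝ)‖ := norm_sub_le _ _
          _ ≤ Real.sqrt n + 1 := by linarith
          _ ≤ (n:ℝ) + 1 := by linarith
    have htrans : Isometry (fun y : Euc n => cε • EuclideanSpace.single i (1:ℝ) + y) :=
      Isometry.of_dist_eq fun x y => by simp [dist_add_left]
    have hfin := subspace_fin W (K := (n:ℝ) + 1)
    rw [hW] at hfin
    have hcast : (((n - 1 : ℕ) : ℝ)) = (n : ℝ) - 1 := by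
      push_cast [Nat.cast_sub (by omega : 1 ≤ n)]; ring
    rw [hcast] at hfin
    calc μH[(n:ℝ)-1] (F i ε)
        ≤ μH[(n:ℝ)-1] ((fun y => cε • EuclideanSpace.single i (1:ℝ) + y) ''
            ((W : Set (Euc n)) ∩ Metric.closedBall 0 ((n:ℝ) + 1))) := measure_mono hsub
      _ = μH[(n:ℝ)-1] ((W : Set (Euc n)) ∩ Metric.closedBall 0 ((n:ℝ) + 1)) :=
          htrans.hausdorffMeasure_image (Or.inl hd0) _
      _ < ⊤ := hfin
  -- ρ is C¹ near each face point
  have hρdiff : ∀ i ε, ∀ x ∈ F i ε, ContDiffAt ℝ 1 ρ x := by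
    intro i ε x hx
    have hx0 : x ≠ 0 := by
      intro h
      have := hFnorm i ε x hx
      rw [h] at this
      norm_num at this
    have h1 : ContDiffAt ℝ 1 (fun y : Euc n => ‖y‖) x := contDiffAt_norm ℝ hx0
    have h2 : ContDiffAt ℝ 1 (fun y : Euc n => R * ‖y‖⁻¹) x :=
      contDiffAt_const.mul (h1.inv (norm_ne_zero_iff.mpr hx0))
    exact contDiffAt_const.add (h2.smul contDiffAt_id)
  -- coverage
  have hcover : Metric.sphere m R ⊆ ⋃ i : Fin n, ⋃ ε : Bool, ρ '' (F i ε) := by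
    intro x hx
    have hv : ‖x - m‖ = R := by rw [← dist_eq_norm]; exact hx
    have hv0 : x - m ≠ 0 := by
      intro h; rw [h] at hv; simp at hv; exact hR.ne' hv.symm
    haveI : Nonempty (Fin n) := ⟨⟨0, by omega⟩⟩
    obtain ⟨i, -, hi⟩ := Finset.exists_mem_eq_sup' (Finset.univ_nonempty)
      (fun j => |(x - m) j|)
    set T := Finset.univ.sup' Finset.univ_nonempty (fun j => |(x - m) j|) with hT_def
    have hTle : ∀ j, |(x - m) j| ≤ T := fun j =>
      Finset.le_sup' (f := fun j => |(x - m) j|) (Finset.mem_univ j)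
    have hT0 : 0 < T := by
      by_contra hc
      push_neg at hc
      have : x - m = 0 := by
        ext j
        have := (hTle j).trans hc
        have habs := abs_nonneg ((x - m) j)
        have : |(x - m) j| = 0 := le_antisymm this habs
        simpa [abs_eq_zero] using this
      exact hv0 this
    have hvi : |(x - m) i| = T := hi.symm
    rcases (abs_eq hT0.le).mp hvi with hcase | hcase
    case' inl => refine Set.mem_iUnion.mpr ⟨i, Set.mem_iUnion.mpr ⟨true, ?_⟩⟩
    case' inr => refine Set.mem_iUnion.mpr ⟨i, Set.mem_iUnion.mpr ⟨false, ?_⟩⟩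
    all_goals {
      refine ⟨T⁻¹ • (x - m), ⟨?_, ?_⟩, ?_⟩
      · show T⁻¹ * ((x - m) i) = _
        rw [hcase]
        field_simp
        simp
      · intro j
        show |T⁻¹ * ((x - m) j)| ≤ 1
        rw [abs_mul, abs_of_pos (inv_pos.mpr hT0)]
        rw [inv_mul_le_iff₀ hT0, mul_one]
        exact hTle j
      · show m + (R * ‖T⁻¹ • (x - m)‖⁻¹) • T⁻¹ • (x - m) = x
        rw [norm_smul, Real.norm_eq_abs, abs_of_pos (inv_pos.mpr hT0), hv]
        rw [smul_smul]
        rw [show R * (T⁻¹ * R)⁻¹ * T⁻¹ = 1 by field_simp]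
        simp }
  -- conclude
  calc μH[(n:ℝ)-1] (Metric.sphere m R)
      ≤ ∑' i : Fin n, μH[(n:ℝ)-1] (⋃ ε : Bool, ρ '' (F i ε)) :=
        (measure_mono hcover).trans (measure_iUnion_le _)
    _ < ⊤ := by
        rw [tsum_fintype]
        apply ENNReal.sum_lt_top.mpr
        intro i _
        calc μH[(n:ℝ)-1] (⋃ ε : Bool, ρ '' (F i ε))
            ≤ ∑' ε : Bool, μH[(n:ℝ)-1] (ρ '' (F i ε)) := measure_iUnion_le _
          _ < ⊤ := by
              rw [tsum_fintype]
              apply ENNReal.sum_lt_top.mpr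
              intro ε _
              exact loclip_image_fin hd0 (hFcompact i ε) (hρdiff i ε) (hFfin i ε)

lemma one_le_jap {n : ℕ} (x : Euc n) : 1 ≤ jap x := by
  rw [jap]
  calc (1:ℝ) = Real.sqrt 1 := by simp
    _ ≤ Real.sqrt (1 + ‖x‖ ^ 2) := Real.sqrt_le_sqrt (by nlinarith [sq_nonneg ‖x‖])

lemma jap_pos {n : ℕ} (x : Euc n) : 0 < jap x := lt_of_lt_of_le one_pos (one_le_jap x)

lemma norm_le_jap {n : ℕ} (x : Euc n) : ‖x‖ ≤ jap x := by
  rw [jap]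
  calc ‖x‖ = Real.sqrt (‖x‖ ^ 2) := (Real.sqrt_sq (norm_nonneg x)).symm
    _ ≤ Real.sqrt (1 + ‖x‖ ^ 2) := Real.sqrt_le_sqrt (by nlinarith)

lemma jap_mono {n : ℕ} {x y : Euc n} (h : ‖x‖ ≤ ‖y‖) : jap x ≤ jap y := by
  apply Real.sqrt_le_sqrt
  nlinarith [norm_nonneg x]

lemma jap_le_add {n : ℕ} (x y : Euc n) : jap x ≤ jap y + ‖x - y‖ := by
  have h1 : ‖x‖ ≤ ‖y‖ + ‖x - y‖ := by
    calc ‖x‖ = ‖y + (x - y)‖ := by congr 1; abel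
      _ ≤ ‖y‖ + ‖x - y‖ := norm_add_le _ _
  rw [jap, show jap y + ‖x - y‖ = Real.sqrt ((jap y + ‖x - y‖)^2) from
    (Real.sqrt_sq (add_nonneg (jap_pos y).le (norm_nonneg _))).symm]
  apply Real.sqrt_le_sqrt
  have h2 : ‖y‖ ≤ jap y := norm_le_jap y
  have h3 : jap y ^ 2 = 1 + ‖y‖^2 := Real.sq_sqrt (by positivity)
  nlinarith [norm_nonneg x, norm_nonneg y, norm_nonneg (x - y)]

lemma integral_lb {n : ℕ} (hn : 2 ≤ n) (f : Euc n → ℝ) (hf : Continuous f)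
    (hf0 : ∀ x, 0 ≤ f x) (m p : Euc n) {R δ : ℝ} (hR : 0 < R)
    (hδ : 0 < δ) (hδR : δ ≤ R) (hp : dist p m = R) {ε₀ : ℝ} (hε₀ : 0 ≤ ε₀)
    (hbound : ∀ x ∈ Metric.ball p δ, ε₀ ≤ f x) :
    ε₀ * ((2 * (δ / 2) / Real.sqrt ((n - 1 : ℕ))) ^ (n - 1)) ≤
      ∫ x, f x ∂(μH[(n : ℝ) - 1].restrict (Metric.sphere m R)) := by
  set μ := μH[(n : ℝ) - 1].restrict (Metric.sphere m R) with hμ_def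
  haveI : IsFiniteMeasure μ := by
    constructor
    rw [hμ_def, Measure.restrict_apply_univ]
    exact sphere_fin hn m hR
  obtain ⟨M, hM⟩ := (isCompact_sphere m R).exists_bound_of_continuousOn hf.continuousOn
  have hint : Integrable f μ := by
    apply Integrable.mono' (integrable_const M) hf.aestronglyMeasurable
    rw [hμ_def]
    rw [ae_restrict_iff' (Metric.isClosed_sphere).measurableSet]
    exact ae_of_all _ fun x hx => hM x hx
  set κ := (2 * (δ / 2) / Real.sqrt ((n - 1 : ℕ))) ^ (n - 1) with hκ_def
  have h1 : ENNReal.ofReal κ ≤ μ (Metric.ball p δ) := by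
    rw [hμ_def, Measure.restrict_apply Metric.isOpen_ball.measurableSet, Set.inter_comm]
    exact cap_lb hn m p hδ hδR hp
  have h2 : κ ≤ (μ (Metric.ball p δ)).toReal :=
    (ENNReal.ofReal_le_iff_le_toReal (measure_ne_top μ _)).mp h1
  calc ε₀ * κ ≤ ε₀ * (μ (Metric.ball p δ)).toReal := by
        apply mul_le_mul_of_nonneg_left h2 hε₀
    _ ≤ ∫ x in Metric.ball p δ, f x ∂μ :=
        setIntegral_ge_of_const_le_real Metric.isOpen_ball.measurableSet
          (measure_ne_top μ _) hbound hint.integrableOn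
    _ ≤ ∫ x, f x ∂μ := setIntegral_le_integral hint (ae_of_all _ hf0)

set_option maxHeartbeats 2000000 in
theorem stmt14_aux (n : ℕ) (hn : 2 ≤ n) (β : ℝ) (hβ : -(n : ℝ) / 2 < β)
    (qhat : Euc n → ℝ) (hqc : Continuous qhat) (hq0 : ∀ ξ, 0 ≤ qhat ξ)
    (c C : ℝ) (hc : 0 < c) (hC : 0 < C)
    (hlow : ∀ ξ : Euc n, c < ‖ξ‖ → C * jap ξ ^ (-(n : ℝ) / 2 - β) ≤ qhat ξ)
    (hq00 : 0 < qhat 0) :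
    ∃ C' : ℝ, 0 < C' ∧ ∀ η : Euc n, 4 * c < ‖η‖ →
      C' * max (jap η ^ (-β - (n : ℝ) / 2 - 1)) (jap η ^ (-2 * β - 2)) ≤
        ‖η‖⁻¹ * ∫ ξ, qhat ξ * qhat (η - ξ) ∂((MeasureTheory.Measure.hausdorffMeasure
          ((n : ℝ) - 1)).restrict
            (Metric.sphere ((2 : ℝ)⁻¹ • η) (1 * ‖η‖ / 2))) := by
  have hn1 : (1:ℝ) ≤ (n:ℝ) := by exact_mod_cast (by omega : 1 ≤ n)
  set e : ℝ := -(n:ℝ)/2 - β with he_def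
  have he0 : e < 0 := by rw [he_def]; linarith
  obtain ⟨δ₀, hδ₀pos, hδ₀⟩ :=
    Metric.continuousAt_iff.mp hqc.continuousAt (qhat 0 / 2) (by positivity)
  set δ := min c δ₀ with hδ_def
  have hδpos : 0 < δ := lt_min hc hδ₀pos
  have hδc : δ ≤ c := min_le_left _ _
  have hqhalf : ∀ x : Euc n, ‖x‖ < δ → qhat 0 / 2 ≤ qhat x := by
    intro x hx
    have h1 : dist x 0 < δ₀ := by
      rw [dist_zero_right]; exact lt_of_lt_of_le hx (min_le_right _ _)
    have h2 := hδ₀ h1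
    rw [Real.dist_eq] at h2
    rcases abs_lt.mp h2 with ⟨h3, -⟩
    linarith
  have hsqrtpos : 0 < Real.sqrt ((n - 1 : ℕ)) := by
    apply Real.sqrt_pos.2
    exact_mod_cast (by omega : 0 < n - 1)
  set κA : ℝ := (2 * (δ / 2) / Real.sqrt ((n - 1 : ℕ))) ^ (n - 1) with hκA_def
  have hκApos : 0 < κA := pow_pos (div_pos (by linarith) hsqrtpos) _
  have h1δe : (0:ℝ) < (1 + δ) ^ e := Real.rpow_pos_of_pos (by linarith) e
  set a1 : ℝ := (qhat 0 / 2) * (C * (1 + δ) ^ e) * κA with ha1_def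
  have ha1pos : 0 < a1 := by
    apply mul_pos (mul_pos (by linarith) (mul_pos hC h1δe)) hκApos
  have claim1 : ∀ η : Euc n, 4 * c < ‖η‖ →
      a1 * jap η ^ (-β - (n:ℝ)/2 - 1) ≤
      ‖η‖⁻¹ * ∫ ξ, qhat ξ * qhat (η - ξ) ∂((MeasureTheory.Measure.hausdorffMeasure
        ((n : ℝ) - 1)).restrict (Metric.sphere ((2 : ℝ)⁻¹ • η) (1 * ‖η‖ / 2))) := by
    intro η hη
    have hηpos : 0 < ‖η‖ := lt_trans (by positivity) hη
    have hjapη := jap_pos η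
    have hp0 : dist (0 : Euc n) ((2:ℝ)⁻¹ • η) = 1 * ‖η‖ / 2 := by
      rw [dist_eq_norm, zero_sub, norm_neg, norm_smul, norm_inv, Real.norm_ofNat]
      ring
    have hδR : δ ≤ 1 * ‖η‖ / 2 := by
      have : c ≤ ‖η‖ / 2 := by linarith
      linarith
    set ε₀ : ℝ := (qhat 0 / 2) * (C * ((1 + δ) ^ e * jap η ^ e)) with hε₀_def
    have hjape : (0:ℝ) < jap η ^ e := Real.rpow_pos_of_pos hjapη e
    have hε₀0 : 0 ≤ ε₀ := by
      apply mul_nonneg (by linarith) (mul_nonneg hC.le (by positivity))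
    have hbound : ∀ x ∈ Metric.ball (0 : Euc n) δ, ε₀ ≤ qhat x * qhat (η - x) := by
      intro x hx
      rw [Metric.mem_ball, dist_zero_right] at hx
      have h1 : qhat 0 / 2 ≤ qhat x := hqhalf x hx
      have h2 : c < ‖η - x‖ := by
        have h3 : ‖η‖ ≤ ‖η - x‖ + ‖x‖ := by
          calc ‖η‖ = ‖(η - x) + x‖ := by congr 1; abel
            _ ≤ ‖η - x‖ + ‖x‖ := norm_add_le _ _
        linarith
      have h4 : C * jap (η - x) ^ e ≤ qhat (η - x) := hlow _ h2
      have h5 : jap (η - x) ≤ (1 + δ) * jap η := by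
        calc jap (η - x) ≤ jap η + ‖(η - x) - η‖ := jap_le_add _ _
          _ = jap η + ‖x‖ := by rw [show (η - x) - η = -x by abel, norm_neg]
          _ ≤ jap η + δ := by linarith
          _ ≤ (1 + δ) * jap η := by nlinarith [one_le_jap η]
      have h6 : ((1 + δ) * jap η) ^ e ≤ jap (η - x) ^ e :=
        Real.rpow_le_rpow_of_nonpos (jap_pos _) h5 he0.le
      have h7 : ((1 + δ) * jap η) ^ e = (1 + δ) ^ e * jap η ^ e :=
        Real.mul_rpow (by linarith) hjapη.le
      have h8 : C * ((1 + δ) ^ e * jap η ^ e) ≤ qhat (η - x) := by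
        rw [← h7]
        calc C * ((1 + δ) * jap η) ^ e ≤ C * jap (η - x) ^ e :=
              mul_le_mul_of_nonneg_left h6 hC.le
          _ ≤ qhat (η - x) := h4
      calc ε₀ = (qhat 0 / 2) * (C * ((1 + δ) ^ e * jap η ^ e)) := rfl
        _ ≤ qhat x * qhat (η - x) := by
            apply mul_le_mul h1 h8 ?_ (hq0 x)
            apply mul_nonneg hC.le (by positivity)
    have hkey := integral_lb hn (fun ξ => qhat ξ * qhat (η - ξ))
      (hqc.mul (hqc.comp (continuous_const.sub continuous_id)))
      (fun ξ => mul_nonneg (hq0 _) (hq0 _)) ((2:ℝ)⁻¹ • η) 0 (by linarith : 0 < 1 * ‖η‖ / 2)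
      hδpos hδR hp0 hε₀0 hbound
    have hexp : jap η ^ (-β - (n:ℝ)/2 - 1) = jap η ^ e * (jap η)⁻¹ := by
      rw [show -β - (n:ℝ)/2 - 1 = e + (-1) by rw [he_def]; ring,
        Real.rpow_add hjapη, Real.rpow_neg_one]
    have hinv : (jap η)⁻¹ ≤ ‖η‖⁻¹ := by
      apply inv_anti₀ hηpos (norm_le_jap η)
    calc a1 * jap η ^ (-β - (n:ℝ)/2 - 1)
        = ((qhat 0 / 2) * (C * (1 + δ) ^ e) * κA * jap η ^ e) * (jap η)⁻¹ := by
          rw [hexp, ha1_def]; ring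
      _ ≤ ((qhat 0 / 2) * (C * (1 + δ) ^ e) * κA * jap η ^ e) * ‖η‖⁻¹ := by
          apply mul_le_mul_of_nonneg_left hinv
          apply mul_nonneg (mul_nonneg (mul_nonneg (by linarith)
            (mul_nonneg hC.le h1δe.le)) hκApos.le) hjape.le
      _ = ‖η‖⁻¹ * (ε₀ * κA) := by rw [hε₀_def]; ring
      _ ≤ ‖η‖⁻¹ * ∫ ξ, qhat ξ * qhat (η - ξ) ∂((MeasureTheory.Measure.hausdorffMeasure
          ((n : ℝ) - 1)).restrict (Metric.sphere ((2 : ℝ)⁻¹ • η) (1 * ‖η‖ / 2))) := by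
          apply mul_le_mul_of_nonneg_left _ (by positivity)
          exact le_trans (le_of_eq (by ring)) hkey
  -- claim 2
  set Kc : ℝ := Real.sqrt ((4*c)⁻¹^2 + 1) with hKc_def
  have hKcpos : 0 < Kc := Real.sqrt_pos.2 (by positivity)
  set t : ℝ := (4 * Real.sqrt ((n - 1 : ℕ)))⁻¹ with ht_def
  have htpos : 0 < t := by rw [ht_def]; positivity
  set a2 : ℝ := C^2 * t^(n-1) * (Kc^(n-2))⁻¹ with ha2_def
  have ha2pos : 0 < a2 := by positivity
  have claim2 : ∀ η : Euc n, 4 * c < ‖η‖ →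
      a2 * jap η ^ (-2*β - 2) ≤
      ‖η‖⁻¹ * ∫ ξ, qhat ξ * qhat (η - ξ) ∂((MeasureTheory.Measure.hausdorffMeasure
        ((n : ℝ) - 1)).restrict (Metric.sphere ((2 : ℝ)⁻¹ • η) (1 * ‖η‖ / 2))) := by
    intro η hη
    have hηpos : 0 < ‖η‖ := lt_trans (by positivity) hη
    have hη0 : η ≠ 0 := by intro h; rw [h, norm_zero] at hηpos; exact lt_irrefl _ hηpos
    have hjapη := jap_pos η
    set R : ℝ := 1 * ‖η‖ / 2 with hRdef
    have hRpos : 0 < R := by rw [hRdef]; linarith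
    have hRc : 2 * c < R := by rw [hRdef]; linarith
    -- orthogonal unit vector
    obtain ⟨w, hwW, hw0⟩ : ∃ w ∈ (ℝ ∙ η)ᗮ, w ≠ 0 := by
      haveI : Fact (Module.finrank ℝ (Euc n) = (n - 1) + 1) :=
        ⟨by rw [finrank_euclideanSpace_fin]; omega⟩
      have hfr : Module.finrank ℝ ((ℝ ∙ η)ᗮ) = n - 1 :=
        Submodule.finrank_orthogonal_span_singleton hη0
      have hne : ((ℝ ∙ η)ᗮ : Submodule ℝ (Euc n)) ≠ ⊥ := by
        intro h
        rw [h, finrank_bot] at hfr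
        omega
      obtain ⟨w, hw⟩ := Submodule.exists_mem_ne_zero_of_ne_bot hne
      exact ⟨w, hw.1, hw.2⟩
    set u : Euc n := ‖w‖⁻¹ • w with hu_def
    have hwpos : 0 < ‖w‖ := norm_pos_iff.mpr hw0
    have hu : ‖u‖ = 1 := by
      rw [hu_def, norm_smul, norm_inv, norm_norm]
      field_simp
    have hηu : (inner ℝ η u : ℝ) = 0 := by
      have h := Submodule.mem_orthogonal_singleton_iff_inner_right.mp hwW
      rw [hu_def, real_inner_smul_right, h, mul_zero]
    set m : Euc n := (2:ℝ)⁻¹ • η with hm_def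
    set p : Euc n := m + R • u with hp_def
    have hmnorm : ‖m‖ = R := by
      rw [hm_def, norm_smul, norm_inv, Real.norm_ofNat, hRdef]
      ring
    have hmu : (inner ℝ m u : ℝ) = 0 := by
      rw [hm_def, real_inner_smul_left, hηu, mul_zero]
    have hpdist : dist p m = R := by
      rw [dist_eq_norm, hp_def, add_sub_cancel_left, norm_smul, hu, Real.norm_eq_abs,
        abs_of_pos hRpos, mul_one]
    have hRu : ‖R • u‖ = R := by
      rw [norm_smul, hu, Real.norm_eq_abs, abs_of_pos hRpos, mul_one]
    have hpnorm : ‖p‖^2 = 2 * R^2 := by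
      rw [hp_def, norm_add_sq_real, real_inner_smul_right, hmu, hmnorm, hRu]
      ring
    have hηm : η - p = m - R • u := by
      rw [hp_def, hm_def]
      module
    have hηpnorm : ‖η - p‖^2 = 2 * R^2 := by
      rw [hηm, norm_sub_sq_real, real_inner_smul_right, hmu, hmnorm, hRu]
      ring
    have hsqrt2low : (5/4 : ℝ) ≤ Real.sqrt 2 := by
      calc (5/4 : ℝ) = Real.sqrt ((5/4)^2) := (Real.sqrt_sq (by norm_num)).symm
        _ ≤ Real.sqrt 2 := Real.sqrt_le_sqrt (by norm_num)
    have hsqrt2high : Real.sqrt 2 ≤ 3/2 := by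
      calc Real.sqrt 2 ≤ Real.sqrt ((3/2)^2) := Real.sqrt_le_sqrt (by norm_num)
        _ = 3/2 := Real.sqrt_sq (by norm_num)
    have hpn : ‖p‖ = Real.sqrt 2 * R := by
      calc ‖p‖ = Real.sqrt (‖p‖^2) := (Real.sqrt_sq (norm_nonneg p)).symm
        _ = Real.sqrt (2 * R^2) := by rw [hpnorm]
        _ = Real.sqrt 2 * R := by
            rw [Real.sqrt_mul (by norm_num), Real.sqrt_sq hRpos.le]
    have hηpn : ‖η - p‖ = Real.sqrt 2 * R := by
      calc ‖η - p‖ = Real.sqrt (‖η - p‖^2) := (Real.sqrt_sq (norm_nonneg _)).symm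
        _ = Real.sqrt (2 * R^2) := by rw [hηpnorm]
        _ = Real.sqrt 2 * R := by
            rw [Real.sqrt_mul (by norm_num), Real.sqrt_sq hRpos.le]
    set ε₀ : ℝ := (C * jap η ^ e)^2 with hε₀_def
    have hjape : (0:ℝ) < jap η ^ e := Real.rpow_pos_of_pos hjapη e
    have hmulL : (5/4) * R ≤ Real.sqrt 2 * R := mul_le_mul_of_nonneg_right hsqrt2low hRpos.le
    have hmulH : Real.sqrt 2 * R ≤ (3/2) * R := mul_le_mul_of_nonneg_right hsqrt2high hRpos.le
    have hR2 : R = ‖η‖/2 := by rw [hRdef]; ring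
    have hbound : ∀ x ∈ Metric.ball p (R/2), ε₀ ≤ qhat x * qhat (η - x) := by
      intro x hx
      rw [Metric.mem_ball, dist_eq_norm] at hx
      have hxlow : c < ‖x‖ := by
        have h3 : ‖p‖ ≤ ‖x‖ + ‖x - p‖ := by
          calc ‖p‖ = ‖x - (x - p)‖ := by congr 1; abel
            _ ≤ ‖x‖ + ‖x - p‖ := norm_sub_le _ _
        rw [hpn] at h3
        linarith only [h3, hx, hmulL, hRc, hc]
      have hxhigh : ‖x‖ ≤ ‖η‖ := by
        have h3 : ‖x‖ ≤ ‖p‖ + ‖x - p‖ := by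
          calc ‖x‖ = ‖p + (x - p)‖ := by congr 1; abel
            _ ≤ ‖p‖ + ‖x - p‖ := norm_add_le _ _
        rw [hpn] at h3
        linarith only [h3, hx, hmulH, hR2]
      have hηxlow : c < ‖η - x‖ := by
        have h3 : ‖η - p‖ ≤ ‖η - x‖ + ‖x - p‖ := by
          calc ‖η - p‖ = ‖(η - x) + (x - p)‖ := by congr 1; abel
            _ ≤ ‖η - x‖ + ‖x - p‖ := norm_add_le _ _
        rw [hηpn] at h3
        linarith only [h3, hx, hmulL, hRc, hc]
      have hηxhigh : ‖η - x‖ ≤ ‖η‖ := by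
        have h3 : ‖η - x‖ ≤ ‖η - p‖ + ‖x - p‖ := by
          calc ‖η - x‖ = ‖(η - p) - (x - p)‖ := by congr 1; abel
            _ ≤ ‖η - p‖ + ‖x - p‖ := norm_sub_le _ _
        rw [hηpn] at h3
        linarith only [h3, hx, hmulH, hR2]
      have hb1 : C * jap η ^ e ≤ qhat x := by
        have h4 := hlow x hxlow
        have h5 : jap η ^ e ≤ jap x ^ e :=
          Real.rpow_le_rpow_of_nonpos (jap_pos x) (jap_mono hxhigh) he0.le
        calc C * jap η ^ e ≤ C * jap x ^ e := mul_le_mul_of_nonneg_left h5 hC.le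
          _ ≤ qhat x := h4
      have hb2 : C * jap η ^ e ≤ qhat (η - x) := by
        have h4 := hlow _ hηxlow
        have h5 : jap η ^ e ≤ jap (η - x) ^ e :=
          Real.rpow_le_rpow_of_nonpos (jap_pos _) (jap_mono hηxhigh) he0.le
        calc C * jap η ^ e ≤ C * jap (η - x) ^ e := mul_le_mul_of_nonneg_left h5 hC.le
          _ ≤ qhat (η - x) := h4
      have hCe : 0 ≤ C * jap η ^ e := mul_nonneg hC.le hjape.le
      calc ε₀ = (C * jap η ^ e) * (C * jap η ^ e) := by rw [hε₀_def]; ring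
        _ ≤ qhat x * qhat (η - x) := mul_le_mul hb1 hb2 hCe (hq0 x)
    have hε₀0 : 0 ≤ ε₀ := sq_nonneg _
    have hkey := integral_lb hn (fun ξ => qhat ξ * qhat (η - ξ))
      (hqc.mul (hqc.comp (continuous_const.sub continuous_id)))
      (fun ξ => mul_nonneg (hq0 _) (hq0 _)) m p (by linarith : (0:ℝ) < R)
      (by linarith : (0:ℝ) < R/2) (by linarith : R/2 ≤ R) hpdist hε₀0 hbound
    -- the cap constant
    have hκeq : (2 * ((R/2) / 2) / Real.sqrt ((n - 1 : ℕ))) = ‖η‖ * t := by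
      rw [ht_def, hRdef]
      field_simp
      ring
    -- jap bound
    have h1 : jap η ≤ Kc * ‖η‖ := by
      have h4c : (0:ℝ) < 4 * c := by linarith
      have h1a : (1:ℝ) + ‖η‖^2 ≤ ((4*c)⁻¹^2 + 1) * ‖η‖^2 := by
        have hge : (1:ℝ) ≤ (4*c)⁻¹ * ‖η‖ := by
          rw [inv_mul_eq_div, le_div_iff₀ h4c]
          linarith
        have hsq : (1:ℝ) ≤ ((4*c)⁻¹ * ‖η‖)^2 := by
          have h := mul_le_mul hge hge zero_le_one (by positivity)
          rw [sq]; linarith only [h]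
        have hrw : ((4*c)⁻¹^2 + 1) * ‖η‖^2 = ((4*c)⁻¹ * ‖η‖)^2 + ‖η‖^2 := by ring
        rw [hrw]
        linarith only [hsq]
      calc jap η = Real.sqrt (1 + ‖η‖^2) := rfl
        _ ≤ Real.sqrt (((4*c)⁻¹^2 + 1) * ‖η‖^2) := Real.sqrt_le_sqrt h1a
        _ = Kc * ‖η‖ := by
            rw [Real.sqrt_mul (by positivity), Real.sqrt_sq (norm_nonneg η), hKc_def]
    have hncast : ((n - 2 : ℕ) : ℝ) = (n:ℝ) - 2 := by
      push_cast [Nat.cast_sub (by omega : 2 ≤ n)]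
      ring
    have e1 : jap η ^ (-2*β - 2) = (jap η ^ e)^2 * jap η ^ (n - 2 : ℕ) := by
      rw [sq, ← Real.rpow_add hjapη, ← Real.rpow_natCast (jap η) (n - 2),
        ← Real.rpow_add hjapη, hncast, he_def]
      congr 1
      ring
    have e2 : jap η ^ (n - 2 : ℕ) ≤ Kc^(n-2) * ‖η‖^(n-2) := by
      rw [← mul_pow]
      exact pow_le_pow_left₀ hjapη.le h1 _
    calc a2 * jap η ^ (-2*β - 2)
        = (C^2 * (jap η ^ e)^2) * (t^(n-1) * ((Kc^(n-2))⁻¹ * jap η ^ (n - 2 : ℕ))) := by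
          rw [e1, ha2_def]; ring
      _ ≤ (C^2 * (jap η ^ e)^2) * (t^(n-1) * ((Kc^(n-2))⁻¹ * (Kc^(n-2) * ‖η‖^(n-2)))) := by
          apply mul_le_mul_of_nonneg_left _ (by positivity)
          apply mul_le_mul_of_nonneg_left _ (by positivity)
          apply mul_le_mul_of_nonneg_left e2 (by positivity)
      _ = (C^2 * (jap η ^ e)^2) * (t^(n-1) * ‖η‖^(n-2)) := by
          rw [inv_mul_cancel_left₀ (pow_ne_zero _ hKcpos.ne')]
      _ = ‖η‖⁻¹ * (ε₀ * (‖η‖ * t)^(n-1)) := by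
          rw [hε₀_def, mul_pow (C) (jap η ^ e), mul_pow ‖η‖ t,
            show n - 1 = (n - 2) + 1 from by omega, pow_succ ‖η‖ (n-2)]
          field_simp
      _ ≤ ‖η‖⁻¹ * ∫ ξ, qhat ξ * qhat (η - ξ) ∂((MeasureTheory.Measure.hausdorffMeasure
          ((n : ℝ) - 1)).restrict (Metric.sphere ((2 : ℝ)⁻¹ • η) (1 * ‖η‖ / 2))) := by
          apply mul_le_mul_of_nonneg_left _ (by positivity)
          rw [← hκeq] at *
          calc ε₀ * (2 * ((R/2) / 2) / Real.sqrt ((n - 1 : ℕ)))^(n-1)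
              ≤ ∫ ξ, qhat ξ * qhat (η - ξ) ∂((MeasureTheory.Measure.hausdorffMeasure
                ((n : ℝ) - 1)).restrict (Metric.sphere m R)) := hkey
            _ = _ := by rw [hm_def, hRdef]
  -- combine
  refine ⟨min a1 a2, lt_min ha1pos ha2pos, ?_⟩
  intro η hη
  rcases le_total (jap η ^ (-β - (n:ℝ)/2 - 1)) (jap η ^ (-2*β - 2)) with hm | hm
  · rw [max_eq_right hm]
    calc min a1 a2 * jap η ^ (-2*β - 2) ≤ a2 * jap η ^ (-2*β - 2) :=
          mul_le_mul_of_nonneg_right (min_le_right _ _)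
            (Real.rpow_nonneg (jap_pos η).le _)
      _ ≤ _ := claim2 η hη
  · rw [max_eq_left hm]
    calc min a1 a2 * jap η ^ (-β - (n:ℝ)/2 - 1) ≤ a1 * jap η ^ (-β - (n:ℝ)/2 - 1) :=
          mul_le_mul_of_nonneg_right (min_le_left _ _)
            (Real.rpow_nonneg (jap_pos η).le _)
      _ ≤ _ := claim1 η hη

/-- lower bound for the spherical integral
`S(q)(η) = (1/|η|) ∫_{Γ(η)} q̂(ξ) q̂(η-ξ) dσ_η(ξ)` for a potential whose Fourier transform
`q̂` (here denoted `qhat`) is continuous, non-negative, bounded below by `C⟨ξ⟩^{-n/2-β}` for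
`|ξ| > c`, and positive at the origin: for `|η| > 4c`,
`S(q)(η) ≥ C' max(⟨η⟩^{-β-n/2-1}, ⟨η⟩^{-2β-2})`. -/
theorem stmt14 (n : ℕ) (hn : 2 ≤ n) (β : ℝ) (hβ : -(n : ℝ) / 2 < β)
    (qhat : Euc n → ℝ) (hqc : Continuous qhat) (hq0 : ∀ ξ, 0 ≤ qhat ξ)
    (c C : ℝ) (hc : 0 < c) (hC : 0 < C)
    (hlow : ∀ ξ : Euc n, c < ‖ξ‖ → C * jap ξ ^ (-(n : ℝ) / 2 - β) ≤ qhat ξ)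
    (hq00 : 0 < qhat 0) :
    ∃ C' : ℝ, 0 < C' ∧ ∀ η : Euc n, 4 * c < ‖η‖ →
      C' * max (jap η ^ (-β - (n : ℝ) / 2 - 1)) (jap η ^ (-2 * β - 2)) ≤
        ‖η‖⁻¹ * ∫ ξ, qhat ξ * qhat (η - ξ) ∂(ewaldM n 1 η) := by
  unfold ewaldM
  exact stmt14_aux n hn β hβ qhat hqc hq0 c C hc hC hlow hq00
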